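/- Let n ≥ 2 and let A be the circulant matrix of the strong-repulsion model, i.e., A_{ij} = −3/(n⁴ sin⁴(π(i−j)/n)) + 2/(n⁴ sin²(π(i−j)/n)) for i ≠ j and A_{ii} = (n²−1)(n²+11)/(15n⁴) − (2n²−2)/(3n⁴). Then each row of A sums to zero: for every i, A_{ii} = −∑_{j≠i} A_{ij}. -/

import Mathlib

open Real Finset

noncomputable def Ee (n : ℕ) (m : ℤ) : ℂ := Complex.exp (2 * Real.pi * Complex.I * m / n)

lemma Ee_add (n : ℕ) (a b : ℤ) : Ee n (a + b) = Ee n a * Ee n b := by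
  rw [Ee, Ee, Ee, ← Complex.exp_add]
  congr 1
  push_cast
  ring

lemma Ee_zero (n : ℕ) : Ee n 0 = 1 := by simp [Ee]

lemma Ee_n_mul (n : ℕ) (hn : n ≠ 0) (m : ℤ) : Ee n ((n : ℤ) * m) = 1 := by
  have hn' : (n : ℂ) ≠ 0 := Nat.cast_ne_zero.mpr hn
  rw [Ee, show (2 * (Real.pi:ℂ) * Complex.I * (((n:ℤ) * m : ℤ) : ℂ) / n : ℂ)
      = (m : ℤ) * (2 * Real.pi * Complex.I) by push_cast; field_simp]
  exact Complex.exp_int_mul_two_pi_mul_I m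

lemma Ee_mod (n : ℕ) (hn : n ≠ 0) {a b : ℤ} (h : a ≡ b [ZMOD n]) : Ee n a = Ee n b := by
  obtain ⟨t, ht⟩ := h.dvd
  have : a = b + (n : ℤ) * (-t) := by linear_combination -ht
  rw [this, Ee_add, Ee_n_mul n hn, mul_one]

lemma Ee_congr (n : ℕ) (hn : n ≠ 0) {a b : ℤ} (h : ((a : ZMod n)) = (b : ZMod n)) :
    Ee n a = Ee n b :=
  Ee_mod n hn ((ZMod.intCast_eq_intCast_iff a b n).mp h)

lemma Ee_pow (n : ℕ) (a : ℤ) (t : ℕ) : Ee n a ^ t = Ee n (a * t) := by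
  rw [Ee, Ee, ← Complex.exp_nat_mul]
  congr 1
  push_cast
  ring

noncomputable def psi (n : ℕ) (k x : ZMod n) : ℂ := Ee n ((k.val : ℤ) * (x.val : ℤ))

section psisec
variable (n : ℕ) [NeZero n]

lemma psi_comm (k x : ZMod n) : psi n k x = psi n x k := by rw [psi, psi, mul_comm]

lemma psi_zero_right (k : ZMod n) : psi n k 0 = 1 := by
  simp [psi, Ee_zero]

lemma psi_add_right (k x y : ZMod n) : psi n k (x + y) = psi n k x * psi n k y := by
  rw [psi, psi, psi, ← Ee_add]
  apply Ee_congr n (NeZero.ne n)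
  push_cast [ZMod.natCast_val, ZMod.cast_id]
  ring

lemma psi_neg_left (k x : ZMod n) : psi n (-k) x = psi n k (-x) := by
  rw [psi, psi]
  apply Ee_congr n (NeZero.ne n)
  push_cast [ZMod.natCast_val, ZMod.cast_id]
  ring

lemma zmod_sum_val {M : Type*} [AddCommMonoid M] (f : ℕ → M) :
    ∑ x : ZMod n, f x.val = ∑ j ∈ Finset.range n, f j := by
  show ∑ x ∈ (Finset.univ : Finset (ZMod n)), f x.val = ∑ j ∈ Finset.range n, f j
  refine Finset.sum_nbij' (i := fun x : ZMod n => ZMod.val x) (j := fun a : ℕ => (a : ZMod n)) ?_ ?_ ?_ ?_ ?_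
  · intro a _; exact Finset.mem_range.mpr (ZMod.val_lt a)
  · intro a _; exact Finset.mem_univ _
  · intro a _; exact ZMod.natCast_rightInverse a
  · intro a ha; exact ZMod.val_cast_of_lt (Finset.mem_range.mp ha)
  · intro a _; rfl

lemma orth (k : ZMod n) (hk : k ≠ 0) : ∑ x : ZMod n, psi n k x = 0 := by
  have hkv : 0 < k.val := ZMod.val_pos.mpr hk
  have hkv' : k.val < n := ZMod.val_lt k
  have hne : (n : ℂ) ≠ 0 := Nat.cast_ne_zero.mpr (NeZero.ne n)
  set w : ℂ := Ee n (k.val : ℤ) with hw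
  have hw1 : w ≠ 1 := by
    intro h
    rw [hw, Ee] at h
    obtain ⟨m, hm⟩ := Complex.exp_eq_one_iff.mp h
    have h2 : (2 * (Real.pi:ℂ) * Complex.I) ≠ 0 := by
      simp [Real.pi_ne_zero, Complex.I_ne_zero]
    have hm' : 2 * (Real.pi:ℂ) * Complex.I * (((k.val:ℤ):ℂ)) = (m:ℂ) * (2 * Real.pi * Complex.I) * n := by
      rw [div_eq_iff hne] at hm
      push_cast at hm ⊢
      linear_combination hm
    have hcast : (((k.val:ℤ)):ℂ) = ((m * n : ℤ) : ℂ) := by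
      apply mul_left_cancel₀ h2
      push_cast
      linear_combination hm'
    have hZ : (k.val : ℤ) = m * n := by exact_mod_cast hcast
    have hdvd : (n:ℤ) ∣ (k.val : ℤ) := ⟨m, by linarith [hZ]⟩
    have := Int.le_of_dvd (by exact_mod_cast hkv) hdvd
    omega
  have hwn : w ^ n = 1 := by
    rw [hw, Ee_pow, mul_comm, Ee_n_mul n (NeZero.ne n)]
  calc ∑ x : ZMod n, psi n k x
      = ∑ x : ZMod n, w ^ x.val := by
        apply Finset.sum_congr rfl; intro x _; rw [psi, hw, Ee_pow]
    _ = ∑ j ∈ Finset.range n, w ^ j := zmod_sum_val n (fun j => w ^ j)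
    _ = (w ^ n - 1) / (w - 1) := geom_sum_eq hw1 n
    _ = 0 := by rw [hwn, sub_self, zero_div]

lemma orth_sum (z : ZMod n) :
    ∑ k : ZMod n, psi n k z = if z = 0 then (n : ℂ) else 0 := by
  by_cases hz : z = 0
  · simp only [hz, if_pos rfl]
    rw [Finset.sum_congr rfl (fun k _ => psi_zero_right n k)]
    simp [ZMod.card]
  · rw [if_neg hz, ← orth n z hz]
    exact Finset.sum_congr rfl (fun k _ => psi_comm n k z)

end psisec
section powersums
open Finset

lemma sum_pow1 (m : ℕ) : ∑ j ∈ range m, (j:ℝ) = m*(m-1)/2 := by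
  induction m with
  | zero => simp
  | succ m ih => rw [Finset.sum_range_succ, ih]; push_cast; ring

lemma sum_pow2 (m : ℕ) : ∑ j ∈ range m, (j:ℝ)^2 = m*(m-1)*(2*m-1)/6 := by
  induction m with
  | zero => simp
  | succ m ih => rw [Finset.sum_range_succ, ih]; push_cast; ring

lemma sum_quartic (a0 a1 a2 a3 a4 : ℝ) (m : ℕ) :
    ∑ t ∈ range m, (a0 + a1*(t:ℝ) + a2*(t:ℝ)^2 + a3*(t:ℝ)^3 + a4*(t:ℝ)^4)
      = m*a0 + a1*(m*(m-1)/2) + a2*(m*(m-1)*(2*m-1)/6) + a3*((m:ℝ)^2*((m:ℝ)-1)^2/4)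
        + a4*(m*(m-1)*(2*m-1)*(3*(m:ℝ)^2-3*m-1)/30) := by
  induction m with
  | zero => simp
  | succ m ih => rw [Finset.sum_range_succ, ih]; push_cast; ring

end powersums
noncomputable def cc (n : ℕ) (x : ZMod n) : ℝ := ((n:ℝ)-1)/2 - x.val

noncomputable def Ff (n : ℕ) [NeZero n] (k : ZMod n) : ℂ :=
  ∑ x : ZMod n, (cc n x : ℂ) * psi n k x

section Fsec
variable (n : ℕ) [NeZero n]
open Finset

lemma cc_sum : ∑ x : ZMod n, cc n x = 0 := by
  have h : ∑ x : ZMod n, cc n x = ∑ j ∈ range n, (((n:ℝ)-1)/2 - j) :=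
    zmod_sum_val n (fun j => ((n:ℝ)-1)/2 - j)
  rw [h, Finset.sum_sub_distrib, Finset.sum_const, sum_pow1, Finset.card_range, nsmul_eq_mul]
  have hn : (1:ℝ) ≤ n := by exact_mod_cast Nat.one_le_iff_ne_zero.mpr (NeZero.ne n)
  ring

lemma cc_sq_sum : ∑ x : ZMod n, (cc n x)^2 = n*((n:ℝ)^2-1)/12 := by
  have h : ∑ x : ZMod n, (cc n x)^2 = ∑ j ∈ range n, (((n:ℝ)-1)/2 - j)^2 :=
    zmod_sum_val n (fun j => (((n:ℝ)-1)/2 - j)^2)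
  rw [h]
  have h2 : ∀ j ∈ range n, (((n:ℝ)-1)/2 - j)^2
      = (((n:ℝ)-1)/2)^2 + (-((n:ℝ)-1))*(j:ℝ) + 1*(j:ℝ)^2 + 0*(j:ℝ)^3 + 0*(j:ℝ)^4 :=
    fun j _ => by ring
  rw [Finset.sum_congr rfl h2, sum_quartic]
  ring

lemma Ff_zero : Ff n 0 = 0 := by
  rw [Ff]
  have : ∀ x : ZMod n, (cc n x : ℂ) * psi n 0 x = (cc n x : ℂ) := by
    intro x
    rw [psi_comm, psi_zero_right, mul_one]
  rw [Finset.sum_congr rfl (fun x _ => this x)]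
  rw [← Complex.ofReal_sum, cc_sum]
  simp

lemma cc_step (y : ZMod n) :
    cc n y - cc n (y - 1) = -1 + (if y = 0 then (n:ℝ) else 0) := by
  by_cases hy : y = 0
  · subst hy
    rw [if_pos rfl, zero_sub]
    have h1 : (-1 : ZMod n) = ((n - 1 : ℕ) : ZMod n) := by
      have hn1 : 1 ≤ n := Nat.one_le_iff_ne_zero.mpr (NeZero.ne n)
      push_cast [Nat.cast_sub hn1]
      simp [ZMod.natCast_self]
    have h2 : ((-1 : ZMod n)).val = n - 1 := by
      have hn1 : 1 ≤ n := Nat.one_le_iff_ne_zero.mpr (NeZero.ne n)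
      rw [h1, ZMod.val_cast_of_lt (by omega : n - 1 < n)]
    rw [cc, cc, h2, ZMod.val_zero]
    have hn1 : 1 ≤ n := Nat.one_le_iff_ne_zero.mpr (NeZero.ne n)
    push_cast [Nat.cast_sub hn1]
    ring
  · rw [if_neg hy]
    have hv : 0 < y.val := ZMod.val_pos.mpr hy
    have h1 : y - 1 = ((y.val - 1 : ℕ) : ZMod n) := by
      have : (y.val : ZMod n) = y := ZMod.natCast_rightInverse y
      push_cast [Nat.cast_sub hv]
      rw [this]
    have h2 : (y - 1).val = y.val - 1 := by
      rw [h1, ZMod.val_cast_of_lt (by have h := ZMod.val_lt y; omega)]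
    rw [cc, cc, h2]
    have := ZMod.val_lt y
    push_cast [Nat.cast_sub hv]
    ring

lemma Ff_key (k : ZMod n) (hk : k ≠ 0) : (1 - psi n k 1) * Ff n k = n := by
  have hshift : psi n k 1 * Ff n k = ∑ y : ZMod n, (cc n (y - 1) : ℂ) * psi n k y := by
    rw [Ff, Finset.mul_sum]
    have h1 : ∀ x : ZMod n, psi n k 1 * ((cc n x : ℂ) * psi n k x)
        = (cc n x : ℂ) * psi n k (x + 1) := by
      intro x; rw [psi_add_right]; ring
    rw [Finset.sum_congr rfl (fun x _ => h1 x)]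
    exact Fintype.sum_equiv (Equiv.addRight (1 : ZMod n)) _ _
      (fun x => by simp)
  have hexp : (1 - psi n k 1) * Ff n k
      = ∑ y : ZMod n, ((cc n y - cc n (y - 1) : ℝ) : ℂ) * psi n k y := by
    rw [sub_mul, one_mul, hshift, Ff, ← Finset.sum_sub_distrib]
    apply Finset.sum_congr rfl
    intro y _
    push_cast
    ring
  rw [hexp]
  have h2 : ∀ y : ZMod n, ((cc n y - cc n (y - 1) : ℝ) : ℂ) * psi n k y
      = -psi n k y + (if y = 0 then (n:ℂ) else 0) * psi n k y := by
    intro y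
    rw [cc_step]
    push_cast
    by_cases hy : y = 0 <;> simp [hy] <;> ring
  rw [Finset.sum_congr rfl (fun y _ => h2 y), Finset.sum_add_distrib]
  rw [Finset.sum_neg_distrib, orth n k hk, neg_zero, zero_add]
  simp only [ite_mul, zero_mul]
  rw [Finset.sum_ite_eq' Finset.univ (0 : ZMod n) (fun y => (n:ℂ) * psi n k y)]
  simp [psi_zero_right]

end Fsec
section sinlink
variable (n : ℕ) [NeZero n]
open Finset

lemma psi_one_val (hn : 2 ≤ n) (k : ZMod n) : psi n k 1 = Ee n (k.val : ℤ) := by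
  have h1 : (1 : ZMod n).val = 1 := by
    rw [show (1 : ZMod n) = ((1:ℕ) : ZMod n) by norm_cast]
    exact ZMod.val_cast_of_lt (by omega)
  rw [psi, h1]
  norm_num

lemma psi_neg_one_val (hn : 2 ≤ n) (k : ZMod n) : psi n (-k) 1 = Ee n (-(k.val : ℤ)) := by
  rw [psi_one_val n hn]
  apply Ee_congr n (NeZero.ne n)
  push_cast [ZMod.natCast_val, ZMod.cast_id]
  ring

lemma sin_link (hn : 2 ≤ n) (k : ZMod n) :
    (1 - psi n k 1) * (1 - psi n (-k) 1)
      = 4 * ((Real.sin (Real.pi * k.val / n) : ℝ) : ℂ)^2 := by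
  rw [psi_one_val n hn, psi_neg_one_val n hn]
  set u : ℂ := Complex.exp (Real.pi * k.val / n * Complex.I) with hu
  have hu0 : u ≠ 0 := Complex.exp_ne_zero _
  have h1 : Ee n (k.val : ℤ) = u * u := by
    rw [Ee, hu, ← Complex.exp_add]
    congr 1
    have hne : (n:ℂ) ≠ 0 := Nat.cast_ne_zero.mpr (NeZero.ne n)
    push_cast
    field_simp
    ring
  have h2 : Ee n (-(k.val : ℤ)) = (u * u)⁻¹ := by
    rw [← h1, Ee, Ee, ← Complex.exp_neg]
    congr 1
    push_cast
    ring
  have h3 : ((Real.sin (Real.pi * k.val / n) : ℝ) : ℂ)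
      = (Complex.exp (-(Real.pi * k.val / n * Complex.I))
          - Complex.exp (Real.pi * k.val / n * Complex.I)) * Complex.I / 2 := by
    rw [Complex.ofReal_sin, Complex.sin]
    push_cast
    ring_nf
  rw [h1, h2, h3, Complex.exp_neg, ← hu]
  have hstep : 4 * ((u⁻¹ - u) * Complex.I / 2)^2 = 4 * ((u⁻¹ - u)^2 * Complex.I^2 / 4) := by
    ring
  rw [hstep, Complex.I_sq]
  field_simp
  ring
end sinlink
section parseval
variable (n : ℕ) [NeZero n]
open Finset

lemma key2 (hn : 2 ≤ n) (k : ZMod n) (hk : k ≠ 0) :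
    4 * ((Real.sin (Real.pi * k.val / n) : ℝ) : ℂ)^2 * (Ff n k * Ff n (-k)) = (n:ℂ)^2 := by
  have e1 := Ff_key n k hk
  have e2 := Ff_key n (-k) (neg_ne_zero.mpr hk)
  have e3 := sin_link n hn k
  calc 4 * ((Real.sin (Real.pi * k.val / n) : ℝ) : ℂ)^2 * (Ff n k * Ff n (-k))
      = ((1 - psi n k 1) * Ff n k) * ((1 - psi n (-k) 1) * Ff n (-k)) := by
        rw [← e3]; ring
    _ = (n:ℂ) * (n:ℂ) := by rw [e1, e2]
    _ = (n:ℂ)^2 := by ring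

/-- Parseval for real-valued functions on `ZMod n`. -/
lemma parseval (g : ZMod n → ℝ) :
    ∑ k : ZMod n, (∑ x : ZMod n, (g x : ℂ) * psi n k x) * (∑ y : ZMod n, (g y : ℂ) * psi n (-k) y)
      = (n:ℂ) * ∑ x : ZMod n, ((g x : ℂ))^2 := by
  have hterm : ∀ k : ZMod n,
      (∑ x : ZMod n, (g x : ℂ) * psi n k x) * (∑ y : ZMod n, (g y : ℂ) * psi n (-k) y)
        = ∑ x : ZMod n, ∑ y : ZMod n, (g x : ℂ) * (g y : ℂ) * psi n k (x - y) := by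
    intro k
    rw [Finset.sum_mul_sum]
    apply Finset.sum_congr rfl; intro x _
    apply Finset.sum_congr rfl; intro y _
    rw [psi_neg_left, show x - y = x + -y from by ring, psi_add_right]
    ring
  rw [Finset.sum_congr rfl (fun k _ => hterm k)]
  rw [Finset.sum_comm]
  have hswap : ∀ x : ZMod n,
      ∑ k : ZMod n, ∑ y : ZMod n, (g x : ℂ) * (g y : ℂ) * psi n k (x - y)
        = ∑ y : ZMod n, (g x : ℂ) * (g y : ℂ) * (∑ k : ZMod n, psi n k (x - y)) := by
    intro x
    rw [Finset.sum_comm]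
    apply Finset.sum_congr rfl; intro y _
    rw [Finset.mul_sum]
  rw [Finset.sum_congr rfl (fun x _ => hswap x)]
  have hinner : ∀ x : ZMod n,
      ∑ y : ZMod n, (g x : ℂ) * (g y : ℂ) * (∑ k : ZMod n, psi n k (x - y))
        = (n:ℂ) * ((g x : ℂ))^2 := by
    intro x
    have h1 : ∀ y : ZMod n, (g x : ℂ) * (g y : ℂ) * (∑ k : ZMod n, psi n k (x - y))
        = if y = x then (g x : ℂ) * (g y : ℂ) * n else 0 := by
      intro y
      rw [orth_sum n (x - y)]
      by_cases hxy : y = x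
      · simp [hxy, sub_self]
      · have : ¬ (x - y = 0) := fun h => hxy (by
          have := sub_eq_zero.mp h
          exact this.symm)
        simp [this, hxy]
    rw [Finset.sum_congr rfl (fun y _ => h1 y)]
    rw [Finset.sum_ite_eq' Finset.univ x (fun y => (g x : ℂ) * (g y : ℂ) * n)]
    simp
    ring
  rw [Finset.sum_congr rfl (fun x _ => hinner x), ← Finset.mul_sum]

/-- the convolution square of `cc`. -/
noncomputable def dd (n : ℕ) [NeZero n] (s : ZMod n) : ℝ := ∑ y : ZMod n, cc n y * cc n (s - y)

lemma Ff_sq (k : ZMod n) : Ff n k ^ 2 = ∑ s : ZMod n, ((dd n s : ℝ) : ℂ) * psi n k s := by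
  have h1 : ∀ s : ZMod n, ((dd n s : ℝ) : ℂ) * psi n k s
      = ∑ y : ZMod n, (cc n y : ℂ) * (cc n (s - y) : ℂ) * psi n k s := by
    intro s
    rw [dd]
    push_cast
    rw [Finset.sum_mul]
  rw [Finset.sum_congr rfl (fun s _ => h1 s), Finset.sum_comm]
  have h2 : ∀ y : ZMod n,
      ∑ s : ZMod n, (cc n y : ℂ) * (cc n (s - y) : ℂ) * psi n k s
        = ((cc n y : ℂ) * psi n k y) * ∑ z : ZMod n, (cc n z : ℂ) * psi n k z := by
    intro y
    rw [Finset.mul_sum]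
    refine Fintype.sum_equiv (Equiv.subRight y) _ _ ?_
    intro s
    simp only [Equiv.subRight_apply]
    rw [show s = (s - y) + y from by ring, psi_add_right]
    ring_nf
  rw [Finset.sum_congr rfl (fun y _ => h2 y), ← Finset.sum_mul, ← Ff, sq]

end parseval
section ddsec
variable (n : ℕ) [NeZero n]
open Finset

lemma hsum_cc (m : ℕ) : ∑ j ∈ range m, (((n:ℝ)-1)/2 - j) = m*((n:ℝ)-1)/2 - m*(m-1)/2 := by
  rw [Finset.sum_sub_distrib, Finset.sum_const, sum_pow1, Finset.card_range, nsmul_eq_mul]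
  ring

lemma val_sub_cast (s : ZMod n) (j : ℕ) (hj : j < n) :
    ((s - (j : ZMod n)).val : ℝ) = (s.val : ℝ) - j + (if s.val < j then (n:ℝ) else 0) := by
  set t := s.val with htdef
  have ht : t < n := ZMod.val_lt s
  have hjn : j ≤ n := le_of_lt hj
  have hrepr : s - (j : ZMod n) = ((t + n - j : ℕ) : ZMod n) := by
    have hs : ((t : ℕ) : ZMod n) = s := ZMod.natCast_rightInverse s
    have h1 : (t + n - j : ℕ) = t + (n - j) := by omega
    rw [h1]
    push_cast [Nat.cast_sub hjn]
    rw [ZMod.natCast_self, hs]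
    ring
  by_cases hcase : t < j
  · rw [if_pos hcase, hrepr, ZMod.val_cast_of_lt (by omega : t + n - j < n)]
    push_cast [Nat.cast_sub (by omega : j ≤ t + n)]
    ring
  · rw [if_neg hcase]
    push_neg at hcase
    have h2 : (t + n - j : ℕ) = (t - j) + n := by omega
    have h3 : ((t + n - j : ℕ) : ZMod n) = ((t - j : ℕ) : ZMod n) := by
      rw [h2]; push_cast; rw [ZMod.natCast_self]; ring
    rw [hrepr, h3, ZMod.val_cast_of_lt (by omega : t - j < n)]
    push_cast [Nat.cast_sub hcase]
    ring

lemma dd_eq (s : ZMod n) :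
    dd n s = -(n:ℝ)*((n:ℝ)^2-1)/12 - n*((s.val:ℝ)+1)*((s.val:ℝ)+1-n)/2 := by
  set t := s.val with htdef
  have ht : t < n := ZMod.val_lt s
  have step1 : dd n s
      = ∑ j ∈ range n, ((((n:ℝ)-1)/2 - j) * cc n (s - (j : ZMod n))) := by
    rw [dd]
    have h : ∀ y : ZMod n, cc n y * cc n (s - y)
        = (fun j : ℕ => (((n:ℝ)-1)/2 - (j:ℝ)) * cc n (s - ((j : ℕ) : ZMod n))) y.val := by
      intro y
      simp only
      rw [show ((y.val : ℕ) : ZMod n) = y from ZMod.natCast_rightInverse y]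
      rfl
    rw [Finset.sum_congr rfl (fun y _ => h y)]
    exact zmod_sum_val n (fun j : ℕ => (((n:ℝ)-1)/2 - (j:ℝ)) * cc n (s - ((j : ℕ) : ZMod n)))
  have step2 : ∀ j ∈ range n,
      (((n:ℝ)-1)/2 - j) * cc n (s - (j : ZMod n))
        = (((n:ℝ)-1)/2 - j) * (((n:ℝ)-1)/2 - (t:ℝ) + j)
          - (if t < j then (n:ℝ)*(((n:ℝ)-1)/2 - j) else 0) := by
    intro j hj
    rw [cc, val_sub_cast n s j (Finset.mem_range.mp hj), ← htdef]
    by_cases h : t < j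
    · simp only [if_pos h]; ring
    · simp only [if_neg h]; ring
  rw [step1, Finset.sum_congr rfl step2, Finset.sum_sub_distrib]
  have part_a : ∑ j ∈ range n, ((((n:ℝ)-1)/2 - j) * (((n:ℝ)-1)/2 - (t:ℝ) + j))
      = n*((((n:ℝ)-1)/2)*((((n:ℝ)-1)/2) - t)) + (t:ℝ)*(n*((n:ℝ)-1)/2)
        - n*((n:ℝ)-1)*(2*(n:ℝ)-1)/6 := by
    have hpt : ∀ j ∈ range n, (((n:ℝ)-1)/2 - j) * (((n:ℝ)-1)/2 - (t:ℝ) + j)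
        = ((((n:ℝ)-1)/2)*((((n:ℝ)-1)/2) - t)) + (t:ℝ)*(j:ℝ) + (-1)*(j:ℝ)^2
          + 0*(j:ℝ)^3 + 0*(j:ℝ)^4 := fun j _ => by ring
    rw [Finset.sum_congr rfl hpt, sum_quartic]
    ring
  have part_b : ∑ j ∈ range n, (if t < j then (n:ℝ)*(((n:ℝ)-1)/2 - j) else 0)
      = (n:ℝ) * ((∑ j ∈ range n, (((n:ℝ)-1)/2 - j))
          - (∑ j ∈ range (t+1), (((n:ℝ)-1)/2 - j))) := by
    have hsplit : t + 1 ≤ n := ht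
    rw [← Finset.sum_range_add_sum_Ico _ hsplit]
    have hz : ∀ j ∈ range (t+1), (if t < j then (n:ℝ)*(((n:ℝ)-1)/2 - j) else 0) = 0 := by
      intro j hj
      rw [if_neg (by have := Finset.mem_range.mp hj; omega)]
    rw [Finset.sum_congr rfl hz, Finset.sum_const_zero, zero_add]
    have hp : ∀ j ∈ Finset.Ico (t+1) n,
        (if t < j then (n:ℝ)*(((n:ℝ)-1)/2 - j) else 0) = (n:ℝ)*(((n:ℝ)-1)/2 - j) := by
      intro j hj
      rw [if_pos (by have := (Finset.mem_Ico.mp hj).1; omega)]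
    rw [Finset.sum_congr rfl hp, ← Finset.mul_sum, Finset.sum_Ico_eq_sub _ hsplit]
  rw [part_a, part_b, hsum_cc, hsum_cc]
  push_cast
  ring

end ddsec
section ddsq
variable (n : ℕ) [NeZero n]
open Finset

lemma dd_sq_sum : ∑ s : ZMod n, (dd n s)^2
    = (n:ℝ)^3*((n:ℝ)^2-1)*((n:ℝ)^2+11)/720 := by
  have h1 : ∀ s : ZMod n, (dd n s)^2
      = (fun t : ℕ => (-(n:ℝ)*((n:ℝ)^2-1)/12 - n*((t:ℝ)+1)*((t:ℝ)+1-n)/2)^2) s.val := by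
    intro s
    simp only
    rw [dd_eq]
  rw [Finset.sum_congr rfl (fun s _ => h1 s),
    zmod_sum_val n (fun t : ℕ => (-(n:ℝ)*((n:ℝ)^2-1)/12 - n*((t:ℝ)+1)*((t:ℝ)+1-n)/2)^2)]
  have h2 : ∀ t ∈ range n,
      (-(n:ℝ)*((n:ℝ)^2-1)/12 - n*((t:ℝ)+1)*((t:ℝ)+1-n)/2)^2
        = ((-(n:ℝ)*((n:ℝ)^2-1)/12) + (-(n:ℝ)/2)*(1-(n:ℝ)))^2
          + (2*(-(n:ℝ)/2)^2*(2-(n:ℝ))*(1-(n:ℝ)) + 2*(-(n:ℝ)*((n:ℝ)^2-1)/12)*(-(n:ℝ)/2)*(2-(n:ℝ)))*(t:ℝ)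
          + ((-(n:ℝ)/2)^2*((2-(n:ℝ))^2 + 2*(1-(n:ℝ))) + 2*(-(n:ℝ)*((n:ℝ)^2-1)/12)*(-(n:ℝ)/2))*(t:ℝ)^2
          + (2*(-(n:ℝ)/2)^2*(2-(n:ℝ)))*(t:ℝ)^3
          + ((-(n:ℝ)/2)^2)*(t:ℝ)^4 := fun t _ => by ring
  rw [Finset.sum_congr rfl h2, sum_quartic]
  ring

end ddsq
section bigsum
variable (n : ℕ) [NeZero n]
open Finset

lemma big_sumC (hn : 2 ≤ n) :
    ∑ k ∈ Finset.univ.erase (0 : ZMod n),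
        (-3 / ((n:ℂ)^4 * ((Real.sin (Real.pi * k.val / n) : ℝ) : ℂ)^4)
          + 2 / ((n:ℂ)^4 * ((Real.sin (Real.pi * k.val / n) : ℝ) : ℂ)^2))
      = (2*(n:ℂ)^2-2)/(3*(n:ℂ)^4) - ((n:ℂ)^2-1)*((n:ℂ)^2+11)/(15*(n:ℂ)^4) := by
  have hne : (n:ℂ) ≠ 0 := Nat.cast_ne_zero.mpr (NeZero.ne n)
  have hnR : (0:ℝ) < n := by positivity
  set P : ZMod n → ℂ := fun k => Ff n k * Ff n (-k) with hP
  -- total sums via Parseval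
  have sum1 : ∑ k : ZMod n, P k = (n:ℂ) * ((n:ℝ)*((n:ℝ)^2-1)/12 : ℝ) := by
    have h := parseval n (cc n)
    have h2 : ∑ x : ZMod n, ((cc n x : ℝ):ℂ)^2 = ((∑ x : ZMod n, (cc n x)^2 : ℝ) : ℂ) := by
      push_cast; rfl
    rw [hP]
    simp only [Ff]
    rw [h, h2, cc_sq_sum]
  have sum2 : ∑ k : ZMod n, (P k)^2
      = (n:ℂ) * (((n:ℝ)^3*((n:ℝ)^2-1)*((n:ℝ)^2+11)/720 : ℝ) : ℂ) := by
    have h := parseval n (dd n)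
    have h2 : ∑ x : ZMod n, ((dd n x : ℝ):ℂ)^2 = ((∑ x : ZMod n, (dd n x)^2 : ℝ) : ℂ) := by
      push_cast; rfl
    have h3 : ∀ k : ZMod n, (P k)^2
        = (∑ x : ZMod n, ((dd n x : ℝ):ℂ) * psi n k x)
          * (∑ y : ZMod n, ((dd n y : ℝ):ℂ) * psi n (-k) y) := by
      intro k
      rw [hP]
      simp only
      rw [mul_pow, Ff_sq, Ff_sq]
    rw [Finset.sum_congr rfl (fun k _ => h3 k), h, h2, dd_sq_sum]
  have hP0 : P 0 = 0 := by rw [hP]; simp [Ff_zero]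
  -- erase sums
  have erase1 : ∑ k ∈ Finset.univ.erase (0 : ZMod n), P k = ∑ k : ZMod n, P k := by
    rw [← Finset.sum_erase_add Finset.univ P (Finset.mem_univ 0), hP0, add_zero]
  have erase2 : ∑ k ∈ Finset.univ.erase (0 : ZMod n), (P k)^2 = ∑ k : ZMod n, (P k)^2 := by
    rw [← Finset.sum_erase_add Finset.univ (fun k => (P k)^2) (Finset.mem_univ 0)]
    rw [hP0]
    norm_num
  -- pointwise identity
  have hpt : ∀ k ∈ Finset.univ.erase (0 : ZMod n),
      (-3 / ((n:ℂ)^4 * ((Real.sin (Real.pi * k.val / n) : ℝ) : ℂ)^4)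
          + 2 / ((n:ℂ)^4 * ((Real.sin (Real.pi * k.val / n) : ℝ) : ℂ)^2))
        = (-48/(n:ℂ)^8) * (P k)^2 + (8/(n:ℂ)^6) * (P k) := by
    intro k hk
    have hk0 : k ≠ 0 := (Finset.mem_erase.mp hk).1
    have hkey := key2 n hn k hk0
    have hvpos : 0 < k.val := ZMod.val_pos.mpr hk0
    have hvlt : k.val < n := ZMod.val_lt k
    have hsin : Real.sin (Real.pi * k.val / n) ≠ 0 := by
      have h1 : 0 < Real.pi * k.val / n := by positivity
      have h2 : Real.pi * k.val / n < Real.pi := by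
        rw [div_lt_iff₀ hnR]
        have : (k.val : ℝ) < n := by exact_mod_cast hvlt
        nlinarith [Real.pi_pos]
      exact ne_of_gt (Real.sin_pos_of_pos_of_lt_pi h1 h2)
    set S : ℂ := ((Real.sin (Real.pi * k.val / n) : ℝ) : ℂ) with hS
    have hSne : S ≠ 0 := by
      rw [hS]
      exact Complex.ofReal_ne_zero.mpr hsin
    have h4 : (4:ℂ) * S^2 ≠ 0 := mul_ne_zero (by norm_num) (pow_ne_zero _ hSne)
    have hPk : P k = (n:ℂ)^2 / (4 * S^2) := by
      rw [eq_div_iff h4, hP]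
      simp only
      linear_combination hkey
    apply mul_right_cancel₀ (b := (n:ℂ)^4 * S^4)
      (mul_ne_zero (pow_ne_zero _ hne) (pow_ne_zero _ hSne))
    rw [hPk]
    field_simp
    ring
  rw [Finset.sum_congr rfl hpt, Finset.sum_add_distrib, ← Finset.mul_sum, ← Finset.mul_sum,
    erase1, erase2, sum1, sum2]
  push_cast
  field_simp
  ring

lemma big_sumR (hn : 2 ≤ n) :
    ∑ k ∈ Finset.univ.erase (0 : ZMod n),
        (-3 / ((n:ℝ)^4 * Real.sin (Real.pi * k.val / n)^4)
          + 2 / ((n:ℝ)^4 * Real.sin (Real.pi * k.val / n)^2))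
      = (2*(n:ℝ)^2-2)/(3*(n:ℝ)^4) - ((n:ℝ)^2-1)*((n:ℝ)^2+11)/(15*(n:ℝ)^4) := by
  have h := big_sumC n hn
  exact_mod_cast h

end bigsum
lemma sin_sq_add_int_mul_pi (x : ℝ) (m : ℤ) :
    Real.sin (x + m * Real.pi)^2 = Real.sin x ^ 2 := by
  rw [Real.sin_add, Real.sin_int_mul_pi, mul_zero, add_zero, mul_pow]
  have h := Real.sin_sq_add_cos_sq ((m:ℝ) * Real.pi)
  rw [Real.sin_int_mul_pi] at h
  have hcos : Real.cos ((m:ℝ) * Real.pi)^2 = 1 := by nlinarith [h]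
  rw [hcos, mul_one]

theorem circulant_row_sum_zero (n : ℕ) (hn : 2 ≤ n)
    (A : Matrix (Fin n) (Fin n) ℝ)
    (hA : ∀ i j : Fin n, i ≠ j →
      A i j = -3 / ((n : ℝ) ^ 4 * Real.sin (π * (((i : ℕ) : ℝ) - ((j : ℕ) : ℝ)) / n) ^ 4)
        + 2 / ((n : ℝ) ^ 4 * Real.sin (π * (((i : ℕ) : ℝ) - ((j : ℕ) : ℝ)) / n) ^ 2))
    (hAd : ∀ i : Fin n, A i i
      = ((n : ℝ) ^ 2 - 1) * ((n : ℝ) ^ 2 + 11) / (15 * (n : ℝ) ^ 4)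
        - (2 * (n : ℝ) ^ 2 - 2) / (3 * (n : ℝ) ^ 4)) :
    ∀ i : Fin n, A i i = -∑ j ∈ Finset.univ.erase i, A i j := by
  haveI : NeZero n := ⟨by omega⟩
  intro i
  have hneR : (n:ℝ) ≠ 0 := by positivity
  have hbij : ∑ j ∈ Finset.univ.erase i, A i j
      = ∑ k ∈ Finset.univ.erase (0 : ZMod n),
          (-3 / ((n:ℝ)^4 * Real.sin (Real.pi * k.val / n)^4)
            + 2 / ((n:ℝ)^4 * Real.sin (Real.pi * k.val / n)^2)) := by
    refine Finset.sum_nbij'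
      (i := fun j : Fin n => ((i.val : ZMod n) - (j.val : ZMod n)))
      (j := fun k : ZMod n => (⟨((i.val : ZMod n) - k).val, ZMod.val_lt _⟩ : Fin n))
      ?_ ?_ ?_ ?_ ?_
    · intro j hj
      have hji : j ≠ i := (Finset.mem_erase.mp hj).1
      refine Finset.mem_erase.mpr ⟨?_, Finset.mem_univ _⟩
      intro h0
      have heq : (i.val : ZMod n) = (j.val : ZMod n) := by
        have := sub_eq_zero.mp h0
        exact this
      have : i.val = j.val := by
        have h1 := congrArg ZMod.val heq
        rwa [ZMod.val_cast_of_lt i.isLt, ZMod.val_cast_of_lt j.isLt] at h1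
      exact hji (Fin.ext this.symm)
    · intro k hk
      have hk0 : k ≠ 0 := (Finset.mem_erase.mp hk).1
      refine Finset.mem_erase.mpr ⟨?_, Finset.mem_univ _⟩
      intro h0
      have h1 : ((i.val : ZMod n) - k).val = i.val := congrArg Fin.val h0
      have h2 : (i.val : ZMod n) - k = (i.val : ZMod n) := by
        have := congrArg (fun a : ℕ => (a : ZMod n)) h1
        simpa [ZMod.natCast_rightInverse ((i.val : ZMod n) - k)] using this
      have : k = 0 := by
        have := sub_eq_self.mp h2
        exact this
      exact hk0 this
    · intro j _
      apply Fin.ext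
      simp only
      rw [sub_sub_cancel, ZMod.val_cast_of_lt j.isLt]
    · intro k _
      simp only
      rw [show (((((i.val : ZMod n) - k).val : ℕ)) : ZMod n) = (i.val : ZMod n) - k
        from ZMod.natCast_rightInverse _, sub_sub_cancel]
    · intro j hj
      have hji : j ≠ i := (Finset.mem_erase.mp hj).1
      set k : ZMod n := (i.val : ZMod n) - (j.val : ZMod n) with hkdef
      set z : ℤ := (i.val : ℤ) - (j.val : ℤ) with hzdef
      have hcong : (((k.val : ℤ)) : ZMod n) = (z : ZMod n) := by
        rw [hzdef]
        push_cast [ZMod.natCast_val, ZMod.cast_id]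
        rw [hkdef]
      obtain ⟨m, hm⟩ := ((ZMod.intCast_eq_intCast_iff _ _ _).mp hcong).dvd
      have hmZ : ((i.val : ℤ) - (j.val : ℤ)) - (k.val : ℤ) = (n:ℤ) * m := by
        rw [← hzdef]; linarith [hm]
      have hmR : ((i.val:ℝ) - (j.val:ℝ)) = (k.val:ℝ) + (m:ℝ)*(n:ℝ) := by
        have h := congrArg (fun w : ℤ => (w : ℝ)) hmZ
        push_cast at h
        linarith
      have hreal : Real.pi * ((i.val:ℝ) - (j.val:ℝ)) / n
          = Real.pi * (k.val:ℝ)/n + m * Real.pi := by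
        rw [hmR]
        field_simp
      have hsq : Real.sin (Real.pi * ((i.val:ℝ) - (j.val:ℝ))/n)^2
          = Real.sin (Real.pi * (k.val:ℝ)/n)^2 := by
        rw [hreal, sin_sq_add_int_mul_pi]
      have hsq4 : Real.sin (Real.pi * ((i.val:ℝ) - (j.val:ℝ))/n)^4
          = Real.sin (Real.pi * (k.val:ℝ)/n)^4 := by
        calc Real.sin (Real.pi * ((i.val:ℝ) - (j.val:ℝ))/n)^4
            = (Real.sin (Real.pi * ((i.val:ℝ) - (j.val:ℝ))/n)^2)^2 := by ring
          _ = (Real.sin (Real.pi * (k.val:ℝ)/n)^2)^2 := by rw [hsq]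
          _ = Real.sin (Real.pi * (k.val:ℝ)/n)^4 := by ring
      rw [hA i j (Ne.symm hji)]
      rw [hsq, hsq4]
  rw [hAd i, hbij, big_sumR n hn]
  ring
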